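/- Let n ≥ 1 and let d : (Fin 4)^n → ℝ with d(0,0,…,0) = 1. Let Φ_D be the unique linear map on 2^n × 2^n complex matrices satisfying Φ_D(Σ_v) = d(v) • Σ_v for every v ∈ (Fin 4)^n. For w ∈ (Fin 4)^n set β_w = 4^{−n} ∑_{v ∈ (Fin 4)^n} (∏_{k=1}^n c(w_k, v_k)) d(v). Then for every 2^n × 2^n complex matrix ρ, Φ_D(ρ) = ∑_{w ∈ (Fin 4)^n} β_w • (Σ_w * ρ * Σ_w); i.e., Φ_D has an operator-sum decomposition with operator elements proportional to the tensor-product Pauli matrices. -/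

import Mathlib

open scoped Matrix

/-- The Pauli matrices `σ_0, σ_1, σ_2, σ_3`. -/
def pauli : Fin 4 → Matrix (Fin 2) (Fin 2) ℂ :=
  ![!![1, 0; 0, 1], !![0, 1; 1, 0], !![0, -Complex.I; Complex.I, 0], !![1, 0; 0, -1]]

/-- The `n`-fold Kronecker product `σ_{v 1} ⊗ ⋯ ⊗ σ_{v n}`, realized as a matrix indexed by
`Fin n → Fin 2` (which is canonically identified with `Fin (2 ^ n)`). -/
def pauliTensor {n : ℕ} (v : Fin n → Fin 4) : Matrix (Fin n → Fin 2) (Fin n → Fin 2) ℂ :=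
  Matrix.of fun x y => ∏ k, pauli (v k) (x k) (y k)

/-- `c i j = 1` if `i = 0`, `j = 0` or `i = j`, and `c i j = -1` otherwise. -/
def pauliSign (i j : Fin 4) : ℝ :=
  if i = 0 ∨ j = 0 ∨ i = j then 1 else -1

/-! ### Auxiliary lemmas -/

lemma pauli_conj (i j : Fin 4) : pauli i * pauli j * pauli i = (pauliSign i j : ℂ) • pauli j := by
  fin_cases i <;> fin_cases j <;>
    · ext a b
      fin_cases a <;> fin_cases b <;>
        simp [pauli, pauliSign, Matrix.mul_apply, Fin.sum_univ_two, Complex.ext_iff]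

lemma pauliSign_orth (a b : Fin 4) :
    ∑ i : Fin 4, pauliSign i a * pauliSign i b = if a = b then (4:ℝ) else 0 := by
  fin_cases a <;> fin_cases b <;>
    norm_num +decide [pauliSign, Fin.sum_univ_four]

/-- n-fold Kronecker product of a family of 2×2 matrices. -/
def kron {n : ℕ} (A : Fin n → Matrix (Fin 2) (Fin 2) ℂ) :
    Matrix (Fin n → Fin 2) (Fin n → Fin 2) ℂ :=
  Matrix.of fun x y => ∏ k, A k (x k) (y k)

lemma kron_mul {n : ℕ} (A B : Fin n → Matrix (Fin 2) (Fin 2) ℂ) :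
    kron A * kron B = kron fun k => A k * B k := by
  ext x y
  have h : ∀ k : Fin n, (A k * B k) (x k) (y k)
      = ∑ i : Fin 2, A k (x k) i * B k i (y k) := fun k => Matrix.mul_apply
  simp only [kron, Matrix.mul_apply, Matrix.of_apply, h, Fintype.prod_sum]
  exact Finset.sum_congr rfl fun g _ => Finset.prod_mul_distrib.symm

lemma pauliTensor_eq_kron {n : ℕ} (v : Fin n → Fin 4) :
    pauliTensor v = kron fun k => pauli (v k) := rfl

lemma pauliTensor_conj {n : ℕ} (w v : Fin n → Fin 4) :
    pauliTensor w * pauliTensor v * pauliTensor w =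
      ((∏ k, pauliSign (w k) (v k) : ℝ) : ℂ) • pauliTensor v := by
  simp only [pauliTensor_eq_kron, kron_mul]
  ext x y
  simp only [kron, Matrix.of_apply, Matrix.smul_apply, smul_eq_mul]
  calc ∏ k, (pauli (w k) * pauli (v k) * pauli (w k)) (x k) (y k)
      = ∏ k, ((pauliSign (w k) (v k) : ℂ) * pauli (v k) (x k) (y k)) := by
        refine Finset.prod_congr rfl fun k _ => ?_
        rw [pauli_conj]; simp
    _ = _ := by
        rw [Finset.prod_mul_distrib]
        norm_cast

/-- Coefficients expressing the standard basis matrices in terms of Pauli matrices. -/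
noncomputable def gam : Fin 2 → Fin 2 → Fin 4 → ℂ :=
  ![![![1/2, 0, 0, 1/2], ![0, 1/2, Complex.I/2, 0]],
    ![![0, 1/2, -(Complex.I/2), 0], ![1/2, 0, 0, -(1/2)]]]

lemma gam_spec (a b p q : Fin 2) :
    ∑ i : Fin 4, gam a b i * pauli i p q = if a = p ∧ b = q then 1 else 0 := by
  fin_cases a <;> fin_cases b <;> fin_cases p <;> fin_cases q <;>
    · norm_num [gam, pauli, Fin.sum_univ_four, Complex.ext_iff, Matrix.cons_val_two, Matrix.cons_val_three]

lemma prod_ite_one {n : ℕ} {α : Type*} [Field α] (x p : Fin n → Fin 2) (y q : Fin n → Fin 2) :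
    (∏ k, if x k = p k ∧ y k = q k then (1:α) else 0) = if x = p ∧ y = q then (1:α) else 0 := by
  by_cases h : x = p ∧ y = q
  · rw [if_pos h]
    refine Finset.prod_eq_one fun k _ => if_pos ⟨congrFun h.1 k, congrFun h.2 k⟩
  · rw [if_neg h]
    rcases not_and_or.mp h with h' | h'
    · obtain ⟨k, hk⟩ := Function.ne_iff.mp h'
      exact Finset.prod_eq_zero (Finset.mem_univ k) (if_neg fun hc => hk hc.1)
    · obtain ⟨k, hk⟩ := Function.ne_iff.mp h'
      exact Finset.prod_eq_zero (Finset.mem_univ k) (if_neg fun hc => hk hc.2)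

lemma stdBasis_eq_sum {n : ℕ} (x y : Fin n → Fin 2) :
    Matrix.single x y (1:ℂ) =
      ∑ v : Fin n → Fin 4, (∏ k, gam (x k) (y k) (v k)) • pauliTensor v := by
  ext p q
  simp only [Matrix.sum_apply, Matrix.smul_apply, pauliTensor, Matrix.of_apply, smul_eq_mul]
  have h1 : ∀ v : Fin n → Fin 4,
      (∏ k, gam (x k) (y k) (v k)) * ∏ k, pauli (v k) (p k) (q k)
        = ∏ k, gam (x k) (y k) (v k) * pauli (v k) (p k) (q k) :=
    fun v => Finset.prod_mul_distrib.symm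
  simp only [h1]
  rw [← Fintype.prod_sum fun k i => gam (x k) (y k) i * pauli i (p k) (q k)]
  simp only [gam_spec]
  rw [prod_ite_one]
  simp [Matrix.single, and_comm]

lemma span_pauliTensor {n : ℕ} :
    Submodule.span ℂ (Set.range (pauliTensor (n := n))) = ⊤ := by
  rw [eq_top_iff]
  intro ρ _
  rw [Matrix.matrix_eq_sum_single ρ]
  refine Submodule.sum_mem _ fun x _ => Submodule.sum_mem _ fun y _ => ?_
  have : Matrix.single x y (ρ x y) = ρ x y • Matrix.single x y (1:ℂ) := by
    rw [Matrix.smul_single, smul_eq_mul, mul_one]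
  rw [this, stdBasis_eq_sum]
  exact Submodule.smul_mem _ _ <| Submodule.sum_mem _ fun v _ =>
    Submodule.smul_mem _ _ (Submodule.subset_span ⟨v, rfl⟩)

lemma prod_ite_four {n : ℕ} (u v : Fin n → Fin 4) :
    (∏ k, if u k = v k then (4:ℝ) else 0) = if u = v then (4:ℝ)^n else 0 := by
  by_cases h : u = v
  · subst h; simp
  · rw [if_neg h]
    obtain ⟨k, hk⟩ := Function.ne_iff.mp h
    exact Finset.prod_eq_zero (Finset.mem_univ k) (if_neg hk)

lemma key_identity {n : ℕ} (d : (Fin n → Fin 4) → ℝ) (v : Fin n → Fin 4) :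
    ∑ w : Fin n → Fin 4,
      ((∑ u : Fin n → Fin 4, (∏ k, pauliSign (w k) (u k)) * d u) / 4 ^ n) *
        (∏ k, pauliSign (w k) (v k)) = d v := by
  have h4 : (4:ℝ)^n ≠ 0 := by positivity
  calc ∑ w : Fin n → Fin 4,
        ((∑ u : Fin n → Fin 4, (∏ k, pauliSign (w k) (u k)) * d u) / 4 ^ n) *
          (∏ k, pauliSign (w k) (v k))
      = (∑ w : Fin n → Fin 4, ∑ u : Fin n → Fin 4,
          ((∏ k, pauliSign (w k) (u k) * pauliSign (w k) (v k)) * d u)) / 4 ^ n := by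
        rw [Finset.sum_div]
        refine Finset.sum_congr rfl fun w _ => ?_
        rw [div_mul_eq_mul_div, Finset.sum_mul]
        congr 1
        refine Finset.sum_congr rfl fun u _ => ?_
        rw [Finset.prod_mul_distrib]; ring
    _ = (∑ u : Fin n → Fin 4,
          (∑ w : Fin n → Fin 4, ∏ k, pauliSign (w k) (u k) * pauliSign (w k) (v k)) * d u)
            / 4 ^ n := by
        rw [Finset.sum_comm]
        congr 1
        exact Finset.sum_congr rfl fun u _ => (Finset.sum_mul _ _ _).symm
    _ = (∑ u : Fin n → Fin 4, (if u = v then (4:ℝ)^n else 0) * d u) / 4 ^ n := by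
        congr 1
        refine Finset.sum_congr rfl fun u _ => ?_
        congr 1
        rw [← Fintype.prod_sum fun k i => pauliSign i (u k) * pauliSign i (v k)]
        simp only [pauliSign_orth]
        exact prod_ite_four u v
    _ = d v := by
        simp only [ite_mul, zero_mul, Finset.sum_ite_eq', Finset.mem_univ, if_true]
        field_simp

lemma real_smul_eq {m : Type*} [Fintype m] (r : ℝ) (M : Matrix m m ℂ) :
    r • M = (r:ℂ) • M := by
  ext i j
  simp [Complex.real_smul]


theorem stmt_8 (n : ℕ) (hn : 1 ≤ n)
    (d : (Fin n → Fin 4) → ℝ) (hd : d (fun _ => 0) = 1)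
    (Φ : Matrix (Fin n → Fin 2) (Fin n → Fin 2) ℂ →ₗ[ℂ]
         Matrix (Fin n → Fin 2) (Fin n → Fin 2) ℂ)
    (hΦ : ∀ v : Fin n → Fin 4, Φ (pauliTensor v) = d v • pauliTensor v) :
    ∀ ρ : Matrix (Fin n → Fin 2) (Fin n → Fin 2) ℂ,
      Φ ρ = ∑ w : Fin n → Fin 4,
        ((∑ v : Fin n → Fin 4, (∏ k, pauliSign (w k) (v k)) * d v) / 4 ^ n) •
          (pauliTensor w * ρ * pauliTensor w) := by
  classical
  let conj : (Fin n → Fin 4) →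
      (Matrix (Fin n → Fin 2) (Fin n → Fin 2) ℂ →ₗ[ℂ]
        Matrix (Fin n → Fin 2) (Fin n → Fin 2) ℂ) := fun w =>
    { toFun := fun ρ => pauliTensor w * ρ * pauliTensor w
      map_add' := fun ρ σ => by rw [Matrix.mul_add, Matrix.add_mul]
      map_smul' := fun c ρ => by simp [Matrix.mul_smul, Matrix.smul_mul] }
  let T : Matrix (Fin n → Fin 2) (Fin n → Fin 2) ℂ →ₗ[ℂ]
      Matrix (Fin n → Fin 2) (Fin n → Fin 2) ℂ :=
    ∑ w : Fin n → Fin 4,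
      (((∑ v : Fin n → Fin 4, (∏ k, pauliSign (w k) (v k)) * d v) / 4 ^ n : ℝ) : ℂ) • conj w
  have hT : ∀ ρ, T ρ = ∑ w : Fin n → Fin 4,
      ((∑ v : Fin n → Fin 4, (∏ k, pauliSign (w k) (v k)) * d v) / 4 ^ n) •
        (pauliTensor w * ρ * pauliTensor w) := by
    intro ρ
    simp only [T, LinearMap.sum_apply, LinearMap.smul_apply, LinearMap.coe_mk, AddHom.coe_mk,
      conj]
    exact Finset.sum_congr rfl fun w _ => (real_smul_eq _ _).symm
  have hmain : Φ = T := by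
    apply LinearMap.ext_on span_pauliTensor
    rintro _ ⟨v, rfl⟩
    rw [hΦ v]
    simp only [T, LinearMap.sum_apply, LinearMap.smul_apply, LinearMap.coe_mk, AddHom.coe_mk,
      conj]
    simp only [pauliTensor_conj, smul_smul]
    rw [← Finset.sum_smul, real_smul_eq]
    congr 1
    have h := key_identity d v
    push_cast
    exact_mod_cast h.symm
  intro ρ
  rw [hmain, hT]
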